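/- Let Y be a non-degenerate log-concave real random variable. Then for all u ≥ 1 and t ≥ 0, P(|Y| ≥ u·t) ≤ P(|Y| ≥ t)^{(u−1)/2}. -/

import Mathlib

open MeasureTheory Finset Pointwise

noncomputable def maxKSum {n : ℕ} (k : ℕ) (x : Fin n → ℝ) : ℝ :=
  sSup {y | ∃ I : Finset (Fin n), I.card = k ∧ y = ∑ i ∈ I, |x i|}

noncomputable def kthMax {n : ℕ} (k : ℕ) (x : Fin n → ℝ) : ℝ :=
  sSup {t : ℝ | k ≤ (Finset.univ.filter (fun i => t ≤ |x i|)).card}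

noncomputable def tk {Ω : Type*} [MeasurableSpace Ω] (μ : Measure Ω) {n : ℕ}
    (X : Fin n → Ω → ℝ) (k : ℝ) : ℝ :=
  sInf {t : ℝ | 0 < t ∧ ∑ i, ∫ ω in {ω | t ≤ |X i ω|}, |X i ω| ∂μ ≤ k * t}

noncomputable def tstar {Ω : Type*} [MeasurableSpace Ω] (μ : Measure Ω) {n : ℕ}
    (X : Fin n → Ω → ℝ) (p : ℝ) : ℝ :=
  sInf {t : ℝ | 0 < t ∧ ∑ i, (μ {ω | t ≤ |X i ω|}).toReal ≤ p}

def IsLogConcave {E : Type*} [AddCommGroup E] [Module ℝ E] [TopologicalSpace E]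
    [MeasurableSpace E] (ν : Measure E) : Prop :=
  ∀ (K L : Set E) (l : ℝ), IsCompact K → IsCompact L → K.Nonempty → L.Nonempty →
    l ∈ Set.Icc (0 : ℝ) 1 → ν K ^ l * ν L ^ (1 - l) ≤ ν (l • K + (1 - l) • L)

noncomputable def med {Ω : Type*} [MeasurableSpace Ω] (μ : Measure Ω) (f : Ω → ℝ) : ℝ :=
  sInf {t : ℝ | (1 : ℝ) / 2 ≤ (μ {ω | f ω ≤ t}).toReal}

noncomputable def kthMaxOn {n : ℕ} (J : Finset (Fin n)) (k : ℕ) (x : Fin n → ℝ) : ℝ :=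
  sSup {t : ℝ | k ≤ (J.filter (fun i => t ≤ |x i|)).card}

open Set Filter Topology in
lemma lc_Ici (ν : Measure ℝ) [IsFiniteMeasure ν] (hlc : IsLogConcave ν)
    {l : ℝ} (hl0 : 0 < l) (hl1 : l < 1) (α β : ℝ) :
    ν (Ici α) ^ l * ν (Ici β) ^ (1 - l) ≤ ν (Ici (l * α + (1 - l) * β)) := by
  have hU : ∀ γ : ℝ, (⋃ N : ℕ, Icc γ (γ + N)) = Ici γ := by
    intro γ
    ext x
    simp only [Set.mem_iUnion, Set.mem_Icc, Set.mem_Ici]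
    constructor
    · rintro ⟨N, h, _⟩; exact h
    · intro hx
      obtain ⟨N, hN⟩ := exists_nat_ge (x - γ)
      exact ⟨N, hx, by linarith⟩
  have hmono : ∀ γ : ℝ, Monotone (fun N : ℕ => Icc γ (γ + N)) := by
    intro γ N M hNM
    exact Icc_subset_Icc le_rfl (by have := (Nat.cast_le (α := ℝ)).mpr hNM; linarith)
  have hT1 : Tendsto (fun N : ℕ => ν (Icc α (α + N))) atTop (𝓝 (ν (Ici α))) := by
    have := tendsto_measure_iUnion_atTop (μ := ν) (hmono α)
    rwa [hU α] at this
  have hT2 : Tendsto (fun N : ℕ => ν (Icc β (β + N))) atTop (𝓝 (ν (Ici β))) := by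
    have := tendsto_measure_iUnion_atTop (μ := ν) (hmono β)
    rwa [hU β] at this
  have hT : Tendsto (fun N : ℕ => ν (Icc α (α + N)) ^ l * ν (Icc β (β + N)) ^ (1 - l)) atTop
      (𝓝 (ν (Ici α) ^ l * ν (Ici β) ^ (1 - l))) := by
    apply ENNReal.Tendsto.mul (hT1.ennrpow_const l) ?_ (hT2.ennrpow_const (1 - l)) ?_
    · right
      exact ENNReal.rpow_ne_top_of_nonneg (by linarith) (measure_ne_top ν _)
    · right
      exact ENNReal.rpow_ne_top_of_nonneg hl0.le (measure_ne_top ν _)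
  refine le_of_tendsto hT (Eventually.of_forall fun N => ?_)
  have h := hlc (Icc α (α + N)) (Icc β (β + N)) l isCompact_Icc isCompact_Icc
    ⟨α, Set.mem_Icc.mpr ⟨le_rfl, le_add_of_nonneg_right (Nat.cast_nonneg N)⟩⟩ ⟨β, Set.mem_Icc.mpr ⟨le_rfl, le_add_of_nonneg_right (Nat.cast_nonneg N)⟩⟩ ⟨hl0.le, hl1.le⟩
  refine h.trans (measure_mono ?_)
  rintro x ⟨y, ⟨c, hc, rfl⟩, z, ⟨d, hd, rfl⟩, rfl⟩
  simp only [smul_eq_mul]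
  rw [Set.mem_Ici]
  have h1 : l * α ≤ l * c := mul_le_mul_of_nonneg_left hc.1 hl0.le
  have h2 : (1 - l) * β ≤ (1 - l) * d := mul_le_mul_of_nonneg_left hd.1 (by linarith)
  linarith

open Set Filter Topology in
lemma lc_Iic (ν : Measure ℝ) [IsFiniteMeasure ν] (hlc : IsLogConcave ν)
    {l : ℝ} (hl0 : 0 < l) (hl1 : l < 1) (α β : ℝ) :
    ν (Iic α) ^ l * ν (Iic β) ^ (1 - l) ≤ ν (Iic (l * α + (1 - l) * β)) := by
  have hU : ∀ γ : ℝ, (⋃ N : ℕ, Icc (γ - N) γ) = Iic γ := by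
    intro γ
    ext x
    simp only [Set.mem_iUnion, Set.mem_Icc, Set.mem_Iic]
    constructor
    · rintro ⟨N, _, h⟩; exact h
    · intro hx
      obtain ⟨N, hN⟩ := exists_nat_ge (γ - x)
      exact ⟨N, by linarith, hx⟩
  have hmono : ∀ γ : ℝ, Monotone (fun N : ℕ => Icc (γ - N) γ) := by
    intro γ N M hNM
    exact Icc_subset_Icc (by have := (Nat.cast_le (α := ℝ)).mpr hNM; linarith) le_rfl
  have hT1 : Tendsto (fun N : ℕ => ν (Icc (α - N) α)) atTop (𝓝 (ν (Iic α))) := by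
    have := tendsto_measure_iUnion_atTop (μ := ν) (hmono α)
    rwa [hU α] at this
  have hT2 : Tendsto (fun N : ℕ => ν (Icc (β - N) β)) atTop (𝓝 (ν (Iic β))) := by
    have := tendsto_measure_iUnion_atTop (μ := ν) (hmono β)
    rwa [hU β] at this
  have hT : Tendsto (fun N : ℕ => ν (Icc (α - N) α) ^ l * ν (Icc (β - N) β) ^ (1 - l)) atTop
      (𝓝 (ν (Iic α) ^ l * ν (Iic β) ^ (1 - l))) := by
    apply ENNReal.Tendsto.mul (hT1.ennrpow_const l) ?_ (hT2.ennrpow_const (1 - l)) ?_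
    · right
      exact ENNReal.rpow_ne_top_of_nonneg (by linarith) (measure_ne_top ν _)
    · right
      exact ENNReal.rpow_ne_top_of_nonneg hl0.le (measure_ne_top ν _)
  refine le_of_tendsto hT (Eventually.of_forall fun N => ?_)
  have h := hlc (Icc (α - N) α) (Icc (β - N) β) l isCompact_Icc isCompact_Icc
    ⟨α, Set.mem_Icc.mpr ⟨sub_le_self α (Nat.cast_nonneg N), le_rfl⟩⟩ ⟨β, Set.mem_Icc.mpr ⟨sub_le_self β (Nat.cast_nonneg N), le_rfl⟩⟩ ⟨hl0.le, hl1.le⟩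
  refine h.trans (measure_mono ?_)
  rintro x ⟨y, ⟨c, hc, rfl⟩, z, ⟨d, hd, rfl⟩, rfl⟩
  simp only [smul_eq_mul]
  rw [Set.mem_Iic]
  have h1 : l * c ≤ l * α := mul_le_mul_of_nonneg_left hc.2 hl0.le
  have h2 : (1 - l) * d ≤ (1 - l) * β := mul_le_mul_of_nonneg_left hd.2 (by linarith)
  linarith

lemma aux_real {a b A C s : ℝ} (ha : 0 ≤ a) (hb : 0 ≤ b) (hA : 0 ≤ A) (hC : 0 ≤ C)
    (hs : 0 ≤ s) (hab : a + b ≤ 1) (hCb : 1 - b ≤ C) (hAa : A ≤ a)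
    (h : A * C ^ s ≤ a ^ (s + 1)) : A ≤ a * (a + b) ^ s := by
  rcases le_or_gt 1 b with hb1 | hb1
  · have ha0 : a = 0 := le_antisymm (by linarith) ha
    have : A ≤ 0 := by linarith [hAa, ha0.le]
    rw [ha0, zero_mul]; linarith
  · have hCpos : 0 < C := lt_of_lt_of_le (by linarith) hCb
    rcases eq_or_lt_of_le ha with ha0 | hapos
    · have : A ≤ 0 := by rw [← ha0] at hAa; exact hAa
      rw [← ha0, zero_mul]; linarith
    · have h2 : a ^ (s + 1) = a * a ^ s := by
        rw [Real.rpow_add hapos, Real.rpow_one]; ring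
      have h3 : a ≤ (a + b) * C := by nlinarith
      have h4 : a ^ s ≤ ((a + b) * C) ^ s :=
        Real.rpow_le_rpow ha h3 hs
      have h5 : ((a + b) * C) ^ s = (a + b) ^ s * C ^ s :=
        Real.mul_rpow (by linarith) hC
      have h6 : A * C ^ s ≤ (a * (a + b) ^ s) * C ^ s := by
        calc A * C ^ s ≤ a * a ^ s := by rw [← h2]; exact h
          _ ≤ a * ((a + b) ^ s * C ^ s) := by
              rw [← h5]; exact mul_le_mul_of_nonneg_left h4 hapos.le
          _ = (a * (a + b) ^ s) * C ^ s := by ring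
      exact le_of_mul_le_mul_right h6 (Real.rpow_pos_of_pos hCpos s)

theorem stmt_9 {Ω : Type*} [MeasurableSpace Ω] (μ : Measure Ω) [IsProbabilityMeasure μ]
    (Y : Ω → ℝ) (hmeas : Measurable Y) (hlc : IsLogConcave (μ.map Y))
    (hnd : ∀ c : ℝ, μ.map Y ≠ Measure.dirac c) :
    ∀ u t : ℝ, 1 ≤ u → 0 ≤ t →
      (μ {ω | u * t ≤ |Y ω|}).toReal ≤ (μ {ω | t ≤ |Y ω|}).toReal ^ ((u - 1) / 2) := by
  intro u t hu ht
  have hle1 : ∀ r : ℝ, (μ {ω | r ≤ |Y ω|}).toReal ≤ 1 := fun r => by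
    calc (μ {ω | r ≤ |Y ω|}).toReal ≤ (1 : ENNReal).toReal :=
          ENNReal.toReal_mono ENNReal.one_ne_top prob_le_one
      _ = 1 := ENNReal.toReal_one
  -- trivial cases
  rcases eq_or_lt_of_le hu with rfl | hu
  · simp only [sub_self, zero_div, Real.rpow_zero]
    exact hle1 _
  rcases eq_or_lt_of_le ht with rfl | ht
  · have : {ω | (0:ℝ) ≤ |Y ω|} = Set.univ := by
      ext ω; simp [abs_nonneg]
    rw [this, measure_univ]
    simp only [ENNReal.toReal_one, Real.one_rpow]
    exact hle1 _
  -- main case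
  set ν := μ.map Y with hν
  have hprob : IsProbabilityMeasure ν := Measure.isProbabilityMeasure_map hmeas.aemeasurable
  have hsetm : ∀ r : ℝ, MeasurableSet {x : ℝ | r ≤ |x|} := fun r =>
    measurableSet_le measurable_const measurable_abs
  have hmap : ∀ r : ℝ, μ {ω | r ≤ |Y ω|} = ν {x | r ≤ |x|} := fun r => by
    rw [hν, Measure.map_apply hmeas (hsetm r)]; rfl
  have hu1 : (0:ℝ) < u + 1 := by linarith
  set l : ℝ := 2 / (u + 1) with hldef
  have hl0 : 0 < l := by positivity
  have hl1 : l < 1 := by rw [hldef, div_lt_one hu1]; linarith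
  set s : ℝ := (u - 1) / 2 with hsdef
  have hs : 0 ≤ s := by rw [hsdef]; linarith
  have h1 := lc_Ici ν hlc hl0 hl1 (u * t) (-t)
  have h2 := lc_Iic ν hlc hl0 hl1 (-(u * t)) t
  have hne : u + 1 ≠ 0 := ne_of_gt hu1
  have e1 : l * (u * t) + (1 - l) * (-t) = t := by rw [hldef]; field_simp; ring
  have e2 : l * (-(u * t)) + (1 - l) * t = -t := by rw [hldef]; field_simp; ring
  rw [e1] at h1
  rw [e2] at h2
  set a : ℝ := (ν (Set.Ici t)).toReal
  set b : ℝ := (ν (Set.Iic (-t))).toReal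
  set A : ℝ := (ν (Set.Ici (u * t))).toReal
  set B : ℝ := (ν (Set.Iic (-(u * t)))).toReal
  set C : ℝ := (ν (Set.Ici (-t))).toReal
  set D : ℝ := (ν (Set.Iic t)).toReal
  have h1r : A ^ l * C ^ (1 - l) ≤ a := by
    have := ENNReal.toReal_mono (measure_ne_top ν _) h1
    rwa [ENNReal.toReal_mul, ← ENNReal.toReal_rpow, ← ENNReal.toReal_rpow] at this
  have h2r : B ^ l * D ^ (1 - l) ≤ b := by
    have := ENNReal.toReal_mono (measure_ne_top ν _) h2
    rwa [ENNReal.toReal_mul, ← ENNReal.toReal_rpow, ← ENNReal.toReal_rpow] at this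
  -- C ≥ 1 - b, D ≥ 1 - a
  have hcover : ∀ r : ℝ, 1 ≤ (ν (Set.Iic r)).toReal + (ν (Set.Ici r)).toReal := by
    intro r
    have : ν Set.univ ≤ ν (Set.Iic r) + ν (Set.Ici r) := by
      rw [← Set.Iic_union_Ici (a := r)]
      exact measure_union_le _ _
    rw [measure_univ] at this
    have := ENNReal.toReal_mono (by finiteness) this
    rwa [ENNReal.toReal_one, ENNReal.toReal_add (measure_ne_top ν _) (measure_ne_top ν _)] at this
  have hC : 1 - b ≤ C := by have := hcover (-t); linarith
  have hD : 1 - a ≤ D := by have := hcover t; linarith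
  -- p = a + b
  have hsplit : {x : ℝ | t ≤ |x|} = Set.Ici t ∪ Set.Iic (-t) := by
    ext x
    simp only [Set.mem_setOf_eq, Set.mem_union, Set.mem_Ici, Set.mem_Iic, le_abs, le_neg]
  have hdisj : Disjoint (Set.Ici t) (Set.Iic (-t)) :=
    (Set.Iic_disjoint_Ici.mpr (by intro h; linarith)).symm
  have hp : (μ {ω | t ≤ |Y ω|}).toReal = a + b := by
    rw [hmap t, hsplit, measure_union hdisj measurableSet_Iic,
      ENNReal.toReal_add (measure_ne_top ν _) (measure_ne_top ν _)]
  have hq : (μ {ω | u * t ≤ |Y ω|}).toReal ≤ A + B := by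
    have hsplit2 : {x : ℝ | u * t ≤ |x|} = Set.Ici (u * t) ∪ Set.Iic (-(u * t)) := by
      ext x
      simp only [Set.mem_setOf_eq, Set.mem_union, Set.mem_Ici, Set.mem_Iic, le_abs, le_neg]
    rw [hmap, hsplit2]
    have h' := measure_union_le (μ := ν) (Set.Ici (u * t)) (Set.Iic (-(u * t)))
    have h'' := ENNReal.toReal_mono (by finiteness) h'
    rwa [ENNReal.toReal_add (measure_ne_top ν _) (measure_ne_top ν _)] at h''
  have hA : A ≤ a := ENNReal.toReal_mono (measure_ne_top ν _)
    (measure_mono (Set.Ici_subset_Ici.mpr (le_mul_of_one_le_left ht.le hu.le)))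
  have hB : B ≤ b := ENNReal.toReal_mono (measure_ne_top ν _)
    (measure_mono (Set.Iic_subset_Iic.mpr (by nlinarith)))
  have hab1 : a + b ≤ 1 := by rw [← hp]; exact hle1 t
  have ha0 : 0 ≤ a := ENNReal.toReal_nonneg
  have hb0 : 0 ≤ b := ENNReal.toReal_nonneg
  have hA0 : 0 ≤ A := ENNReal.toReal_nonneg
  have hB0 : 0 ≤ B := ENNReal.toReal_nonneg
  have hC0 : 0 ≤ C := ENNReal.toReal_nonneg
  have hD0 : 0 ≤ D := ENNReal.toReal_nonneg
  have hs1 : s + 1 = (u + 1) / 2 := by rw [hsdef]; ring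
  have hkey1 : A * C ^ s ≤ a ^ (s + 1) := by
    have hr := Real.rpow_le_rpow
      (mul_nonneg (Real.rpow_nonneg hA0 _) (Real.rpow_nonneg hC0 _)) h1r
      (by positivity : (0:ℝ) ≤ (u + 1) / 2)
    rw [Real.mul_rpow (Real.rpow_nonneg hA0 _) (Real.rpow_nonneg hC0 _),
      ← Real.rpow_mul hA0, ← Real.rpow_mul hC0] at hr
    have el : l * ((u + 1) / 2) = 1 := by rw [hldef]; field_simp
    have el2 : (1 - l) * ((u + 1) / 2) = s := by rw [hldef, hsdef]; field_simp; ring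
    rw [el, el2, Real.rpow_one, ← hs1] at hr
    exact hr
  have hkey2 : B * D ^ s ≤ b ^ (s + 1) := by
    have hr := Real.rpow_le_rpow
      (mul_nonneg (Real.rpow_nonneg hB0 _) (Real.rpow_nonneg hD0 _)) h2r
      (by positivity : (0:ℝ) ≤ (u + 1) / 2)
    rw [Real.mul_rpow (Real.rpow_nonneg hB0 _) (Real.rpow_nonneg hD0 _),
      ← Real.rpow_mul hB0, ← Real.rpow_mul hD0] at hr
    have el : l * ((u + 1) / 2) = 1 := by rw [hldef]; field_simp
    have el2 : (1 - l) * ((u + 1) / 2) = s := by rw [hldef, hsdef]; field_simp; ring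
    rw [el, el2, Real.rpow_one, ← hs1] at hr
    exact hr
  have k1 : A ≤ a * (a + b) ^ s := aux_real ha0 hb0 hA0 hC0 hs hab1 hC hA hkey1
  have k2 : B ≤ b * (a + b) ^ s := by
    have := aux_real hb0 ha0 hB0 hD0 hs (by linarith) (by linarith) hB hkey2
    rwa [add_comm b a] at this
  calc (μ {ω | u * t ≤ |Y ω|}).toReal ≤ A + B := hq
    _ ≤ (a + b) * (a + b) ^ s := by rw [add_mul]; exact add_le_add k1 k2
    _ ≤ (a + b) ^ s := mul_le_of_le_one_left (Real.rpow_nonneg (by linarith) s) hab1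
    _ = (μ {ω | t ≤ |Y ω|}).toReal ^ s := by rw [hp]
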